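/- Let k be an even integer. An integer p > 1 has exactly two k-arithmetic divisors if and only if p is a prime number (in the usual sense). -/
import Mathlib


def odot (k m n : ℤ) : ℤ := (m - n + 1) * n + n * (n - 1) * k / 2

def kDivisors (k a : ℤ) : Set ℤ := {d : ℤ | 0 < d ∧ ∃ b : ℤ, odot k b d = a}

lemma kdiv_eq (k p : ℤ) (hk : Even k) :
    kDivisors k p = {d : ℤ | 0 < d ∧ d ∣ p} := by
  obtain ⟨t, ht⟩ := hk
  ext d
  have hdiv : d * (d - 1) * k / 2 = d * (d - 1) * t := by
    have h2 : d * (d - 1) * k = 2 * (d * (d - 1) * t) := by rw [ht]; ring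
    rw [h2, Int.mul_ediv_cancel_left _ two_ne_zero]
  simp only [kDivisors, Set.mem_setOf_eq, odot, hdiv]
  constructor
  · rintro ⟨hd, b, hb⟩
    refine ⟨hd, ⟨(b - d + 1) + (d - 1) * t, ?_⟩⟩
    rw [← hb]; ring
  · rintro ⟨hd, c, hc⟩
    refine ⟨hd, ⟨c - (d - 1) * t + d - 1, ?_⟩⟩
    rw [hc]; ring

theorem stmt_9 (k p : ℤ) (hk : Even k) (hp : 1 < p) :
    (kDivisors k p).encard = 2 ↔ Prime p := by
  rw [kdiv_eq k p hk]
  constructor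
  · intro h
    by_contra hnp
    rw [Int.prime_iff_natAbs_prime] at hnp
    have h2 : 2 ≤ p.natAbs := by omega
    obtain ⟨m, hm, hm2, hmlt⟩ := Nat.exists_dvd_of_not_prime2 h2 hnp
    have hmp : (m : ℤ) ∣ p := Int.dvd_natAbs.mp (Int.natCast_dvd_natCast.mpr hm)
    have hmlt' : (m : ℤ) < p := by omega
    have hsub : ({1, (m : ℤ), p} : Set ℤ) ⊆ {d : ℤ | 0 < d ∧ d ∣ p} := by
      rintro x (rfl | rfl | rfl)
      · exact ⟨one_pos, one_dvd p⟩
      · exact ⟨by positivity, hmp⟩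
      · exact ⟨by omega, dvd_refl _⟩
    have h3 : ({1, (m : ℤ), p} : Set ℤ).encard = 3 := by
      rw [Set.encard_insert_of_notMem (by simp; omega),
        Set.encard_pair (by omega : (m : ℤ) ≠ p)]
      rfl
    have := Set.encard_mono hsub
    rw [h, h3] at this
    norm_num at this
  · intro hpp
    have hset : {d : ℤ | 0 < d ∧ d ∣ p} = {1, p} := by
      ext d
      simp only [Set.mem_setOf_eq, Set.mem_insert_iff, Set.mem_singleton_iff]
      constructor
      · rintro ⟨hd, e, he⟩
        rcases hpp.irreducible.isUnit_or_isUnit he with hu | hu <;>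
          rw [Int.isUnit_iff] at hu
        · left; omega
        · right
          rcases hu with rfl | rfl
          · omega
          · exfalso; nlinarith
      · rintro (rfl | rfl)
        · exact ⟨one_pos, one_dvd p⟩
        · exact ⟨by omega, dvd_refl _⟩
    rw [hset, Set.encard_pair (by omega : (1 : ℤ) ≠ p)]
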